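/- Let $(S,\mathcal{F},\mu)$ be a $\sigma$-finite measure space, $H$ a separable real Hilbert space, and $F, F_n \in L^2(S; H, \mu)$ with $F_n \rightharpoonup F$ weakly in $L^2(S;H,\mu)$. Then $|F(y)|_H \leq \limsup_{n\to\infty} |F_n(y)|_H$ for $\mu$-almost every $y \in S$. -/

import Mathlib

open MeasureTheory Filter Set
open scoped ENNReal RealInnerProductSpace


open scoped RealInnerProductSpace in
private lemma aux_norming_vec {H : Type*} [NormedAddCommGroup H] [InnerProductSpace ℝ H]
    (x dk : H) (q : ℝ) (hq : 0 < q) (hxq : q < ‖x‖)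
    (hk : ‖x - dk‖ < ‖x‖ * (‖x‖ - q) / (‖x‖ + q)) :
    q * ‖dk‖ ≤ ⟪x, dk⟫ ∧ dk ≠ 0 := by
  set ε : ℝ := ‖x‖ * (‖x‖ - q) / (‖x‖ + q) with hε
  have hx0 : 0 < ‖x‖ := lt_trans hq hxq
  have hsum : (0:ℝ) < ‖x‖ + q := by linarith
  have hεeq : ε * (‖x‖ + q) = ‖x‖ * (‖x‖ - q) := by rw [hε]; field_simp
  have hεx : ε < ‖x‖ := by nlinarith
  have hdk0 : dk ≠ 0 := by
    intro hzero
    rw [hzero, sub_zero] at hk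
    linarith
  have h1 : ⟪x, dk⟫ = ⟪x, x⟫ - ⟪x, x - dk⟫ := by rw [← inner_sub_right, sub_sub_cancel]
  have h2 : ⟪x, x⟫ = ‖x‖ ^ 2 := real_inner_self_eq_norm_sq x
  have h3 : ⟪x, x - dk⟫ ≤ ‖x‖ * ‖x - dk‖ := real_inner_le_norm _ _
  have h4 : ‖x‖ * ‖x - dk‖ < ‖x‖ * ε := mul_lt_mul_of_pos_left hk hx0
  have h5 : ‖dk‖ < ‖x‖ + ε := by
    have : ‖dk‖ ≤ ‖x‖ + ‖x - dk‖ := by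
      calc ‖dk‖ = ‖x - (x - dk)‖ := by rw [sub_sub_cancel]
        _ ≤ ‖x‖ + ‖x - dk‖ := norm_sub_le _ _
    linarith
  have hkey : ‖x‖ ^ 2 - ‖x‖ * ε ≥ q * (‖x‖ + ε) := by nlinarith
  exact ⟨by nlinarith [mul_lt_mul_of_pos_left h5 hq], hdk0⟩

/-- If `F_n ⇀ F` weakly in `L²(S; H, μ)`, then `‖F(y)‖ ≤ limsup_n ‖F_n(y)‖`
for `μ`-almost every `y`. -/
theorem norm_le_limsup_of_weak_L2_conv
    {S : Type*} [MeasurableSpace S] (μ : Measure S) [SigmaFinite μ]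
    {H : Type*} [NormedAddCommGroup H] [InnerProductSpace ℝ H] [CompleteSpace H]
    [SecondCountableTopology H]
    (F : S → H) (Fn : ℕ → S → H)
    (hF : MemLp F 2 μ) (hFn : ∀ n, MemLp (Fn n) 2 μ)
    (hweak : ∀ G : S → H, MemLp G 2 μ →
      Tendsto (fun n => ∫ y, ⟪Fn n y, G y⟫ ∂μ) atTop
        (nhds (∫ y, ⟪F y, G y⟫ ∂μ))) :
    ∀ᵐ y ∂μ, (‖F y‖₊ : ℝ≥0∞) ≤ Filter.limsup (fun n => (‖Fn n y‖₊ : ℝ≥0∞)) atTop := by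
  borelize H
  haveI : Nonempty H := ⟨0⟩
  set d : ℕ → H := TopologicalSpace.denseSeq H with hd
  have hdense : DenseRange d := TopologicalSpace.denseRange_denseSeq H
  set F' : S → H := hF.1.mk F with hF'def
  have hF'sm : StronglyMeasurable F' := hF.1.stronglyMeasurable_mk
  have hFF' : F =ᵐ[μ] F' := hF.1.ae_eq_mk
  set Fn' : ℕ → S → H := fun n => (hFn n).1.mk (Fn n) with hFn'def
  have hFn'sm : ∀ n, StronglyMeasurable (Fn' n) := fun n => (hFn n).1.stronglyMeasurable_mk
  have hFnFn' : ∀ n, Fn n =ᵐ[μ] Fn' n := fun n => (hFn n).1.ae_eq_mk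
  -- the bad sets
  have key : ∀ (k N m : ℕ) (q r : ℚ), ∀ᵐ y ∂μ,
      ¬(((r : ℝ) < q ∧ d k ≠ 0) ∧ y ∈ spanningSets μ m ∧
        (q : ℝ) * ‖d k‖ ≤ ⟪F' y, d k⟫ ∧
        ∀ n, N ≤ n → ⟪Fn' n y, d k⟫ ≤ (r : ℝ) * ‖d k‖) := by
    intro k N m q r
    by_cases h : (r : ℝ) < q ∧ d k ≠ 0
    · obtain ⟨hrq, hdk⟩ := h
      have hdk0 : 0 < ‖d k‖ := norm_pos_iff.mpr hdk
      set B : Set S := spanningSets μ m ∩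
        ({y | (q : ℝ) * ‖d k‖ ≤ ⟪F' y, d k⟫} ∩
          ⋂ n ∈ {n | N ≤ n}, {y | ⟪Fn' n y, d k⟫ ≤ (r : ℝ) * ‖d k‖}) with hBdef
      have hmeas_inner : ∀ (G : S → H), StronglyMeasurable G →
          Measurable fun y => ⟪G y, d k⟫ := fun G hG =>
        (Measurable.inner hG.measurable measurable_const)
      have hB : MeasurableSet B := by
        refine (measurableSet_spanningSets μ m).inter (MeasurableSet.inter ?_ ?_)
        · exact measurableSet_le measurable_const (hmeas_inner F' hF'sm)
        · exact MeasurableSet.biInter (to_countable _)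
            (fun n _ => measurableSet_le (hmeas_inner (Fn' n) (hFn'sm n)) measurable_const)
      have hBfin : μ B ≠ ∞ :=
        ((measure_mono inter_subset_left).trans_lt (measure_spanningSets_lt_top μ m)).ne
      haveI : IsFiniteMeasure (μ.restrict B) :=
        ⟨by rwa [Measure.restrict_apply_univ, lt_top_iff_ne_top]⟩
      -- weak convergence applied to the indicator test function
      set G : S → H := B.indicator fun _ => d k with hGdef
      have hG : MemLp G 2 μ := memLp_indicator_const 2 hB (d k) (Or.inr hBfin)
      have hrepr : ∀ (W : S → H), (fun y => ⟪W y, G y⟫) =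
          fun y => B.indicator (fun z => ⟪W z, d k⟫) y := by
        intro W
        funext y
        by_cases hy : y ∈ B <;>
          simp [hGdef, Set.indicator_apply, hy]
      have hInt : ∀ (W : S → H), MemLp W 2 μ →
          IntegrableOn (fun y => ⟪W y, d k⟫) B μ := by
        intro W hW
        exact ((hW.restrict B).integrable (by norm_num)).inner_const (d k)
      have hIntconst : ∀ c : ℝ, IntegrableOn (fun _ => c) B μ :=
        fun c => integrableOn_const hBfin
      have htend : Tendsto (fun n => ∫ y in B, ⟪Fn n y, d k⟫ ∂μ) atTop
          (nhds (∫ y in B, ⟪F y, d k⟫ ∂μ)) := by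
        have := hweak G hG
        simpa only [hrepr, integral_indicator hB] using this
      -- upper bound for the limit
      have hub : ∫ y in B, ⟪F y, d k⟫ ∂μ ≤ (r : ℝ) * ‖d k‖ * (μ B).toReal := by
        refine le_of_tendsto htend ?_
        filter_upwards [eventually_ge_atTop N] with n hn
        have h1 : ∫ y in B, ⟪Fn n y, d k⟫ ∂μ = ∫ y in B, ⟪Fn' n y, d k⟫ ∂μ :=
          setIntegral_congr_ae hB ((hFnFn' n).mono fun y hy _ => by rw [hy])
        rw [h1]
        calc ∫ y in B, ⟪Fn' n y, d k⟫ ∂μ ≤ ∫ _ in B, (r : ℝ) * ‖d k‖ ∂μ := by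
              refine setIntegral_mono_on (hInt _ ((hFn n).ae_eq (hFnFn' n))) (hIntconst _) hB ?_
              intro y hy
              exact Set.mem_iInter₂.mp hy.2.2 n hn
          _ = (r : ℝ) * ‖d k‖ * (μ B).toReal := by
              rw [setIntegral_const, smul_eq_mul, measureReal_def]; ring
      -- lower bound for the limit
      have hlb : (q : ℝ) * ‖d k‖ * (μ B).toReal ≤ ∫ y in B, ⟪F y, d k⟫ ∂μ := by
        have h1 : ∫ y in B, ⟪F y, d k⟫ ∂μ = ∫ y in B, ⟪F' y, d k⟫ ∂μ :=
          setIntegral_congr_ae hB (hFF'.mono fun y hy _ => by rw [hy])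
        rw [h1]
        calc (q : ℝ) * ‖d k‖ * (μ B).toReal = ∫ _ in B, (q : ℝ) * ‖d k‖ ∂μ := by
              rw [setIntegral_const, smul_eq_mul, measureReal_def]; ring
          _ ≤ ∫ y in B, ⟪F' y, d k⟫ ∂μ := by
              refine setIntegral_mono_on (hIntconst _) (hInt _ (hF.ae_eq hFF')) hB ?_
              intro y hy
              exact hy.2.1
      have hμB : μ B = 0 := by
        have ht0 : 0 ≤ (μ B).toReal := ENNReal.toReal_nonneg
        have ht : (μ B).toReal = 0 := by
          nlinarith [hub, hlb, mul_pos (sub_pos.mpr hrq) hdk0]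
        exact (ENNReal.toReal_eq_zero_iff _).mp ht |>.resolve_right hBfin
      have : ∀ᵐ y ∂μ, y ∉ B := measure_eq_zero_iff_ae_notMem.mp hμB
      filter_upwards [this] with y hy hcon
      exact hy ⟨hcon.2.1, hcon.2.2.1, Set.mem_iInter₂.mpr hcon.2.2.2⟩
    · filter_upwards with y hcon
      exact h hcon.1
  -- combine all null sets
  have hae : ∀ᵐ y ∂μ, (∀ (k N m : ℕ) (q r : ℚ),
      ¬(((r : ℝ) < q ∧ d k ≠ 0) ∧ y ∈ spanningSets μ m ∧
        (q : ℝ) * ‖d k‖ ≤ ⟪F' y, d k⟫ ∧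
        ∀ n, N ≤ n → ⟪Fn' n y, d k⟫ ≤ (r : ℝ) * ‖d k‖)) ∧
      F y = F' y ∧ ∀ n, Fn n y = Fn' n y := by
    refine ((ae_all_iff.mpr fun k => ae_all_iff.mpr fun N => ae_all_iff.mpr fun m =>
      ae_all_iff.mpr fun q => ae_all_iff.mpr fun r => key k N m q r).and
      (hFF'.and (ae_all_iff.mpr hFnFn')))
  filter_upwards [hae] with y hy
  obtain ⟨hyB, hyF, hyFn⟩ := hy
  by_contra hcon
  push_neg at hcon
  set L := Filter.limsup (fun n => (‖Fn n y‖₊ : ℝ≥0∞)) atTop with hL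
  -- pick rationals L < r < q < ‖F y‖
  obtain ⟨r, hr0, hLr, hrF⟩ := ENNReal.lt_iff_exists_rat_btwn.mp hcon
  obtain ⟨q, hq0, hrq', hqF⟩ := ENNReal.lt_iff_exists_rat_btwn.mp hrF
  have hrq : (r : ℝ) < q := by
    have := ENNReal.coe_lt_coe.mp hrq'
    have h2 : (r : ℝ).toNNReal < (q : ℝ).toNNReal := this
    calc (r : ℝ) = ((r : ℝ).toNNReal : ℝ) := (Real.coe_toNNReal _ (by exact_mod_cast hr0)).symm
      _ < ((q : ℝ).toNNReal : ℝ) := by exact_mod_cast h2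
      _ = (q : ℝ) := Real.coe_toNNReal _ (by exact_mod_cast hq0)
  have hqFy : (q : ℝ) < ‖F y‖ := by
    have := ENNReal.coe_lt_coe.mp hqF
    calc (q : ℝ) = ((q : ℝ).toNNReal : ℝ) := (Real.coe_toNNReal _ (by exact_mod_cast hq0)).symm
      _ < (‖F y‖₊ : ℝ) := by exact_mod_cast this
      _ = ‖F y‖ := rfl
  have hq0' : 0 < (q : ℝ) := lt_of_le_of_lt (by exact_mod_cast hr0) hrq
  -- eventually ‖Fn n y‖ ≤ r
  have hev : ∀ᶠ n in atTop, ‖Fn n y‖ < (r : ℝ) := by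
    have := Filter.eventually_lt_of_limsup_lt hLr
    filter_upwards [this] with n hn
    have h2 : ‖Fn n y‖₊ < (r : ℝ).toNNReal := by exact_mod_cast hn
    calc ‖Fn n y‖ = (‖Fn n y‖₊ : ℝ) := rfl
      _ < ((r : ℝ).toNNReal : ℝ) := by exact_mod_cast h2
      _ = (r : ℝ) := Real.coe_toNNReal _ (by exact_mod_cast hr0)
  obtain ⟨N, hN⟩ := eventually_atTop.mp hev
  -- pick a close dense point
  have hxq : (q : ℝ) < ‖F' y‖ := by rw [← hyF]; exact hqFy
  have hx0 : (0:ℝ) < ‖F' y‖ := lt_trans hq0' hxq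
  have hε0 : 0 < ‖F' y‖ * (‖F' y‖ - q) / (‖F' y‖ + q) :=
    div_pos (mul_pos hx0 (by linarith)) (by linarith)
  obtain ⟨k, hk⟩ := hdense.exists_dist_lt (F' y) hε0
  rw [dist_eq_norm] at hk
  obtain ⟨hinner_x, hdk0⟩ := aux_norming_vec (F' y) (d k) q hq0' hxq hk
  -- membership in the bad set
  obtain ⟨m, hm⟩ : ∃ m, y ∈ spanningSets μ m := by
    have : y ∈ ⋃ i, spanningSets μ i := by rw [iUnion_spanningSets]; trivial
    exact mem_iUnion.mp this
  refine hyB k N m q r ⟨⟨hrq, hdk0⟩, hm, hinner_x, fun n hn => ?_⟩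
  have h1 : ⟪Fn' n y, d k⟫ ≤ ‖Fn' n y‖ * ‖d k‖ := real_inner_le_norm _ _
  have h2 : ‖Fn' n y‖ ≤ (r : ℝ) := by rw [← hyFn n]; exact le_of_lt (hN n hn)
  have h3 : 0 ≤ ‖d k‖ := norm_nonneg _
  nlinarith
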